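/- Let A, B, C, D > 0 and define the AFO bandwidths h₊* = θ* n^{-1/5}, h₋* = λ* h₊* where λ* = (A·D/(B·C))^{1/3} with A = φ₊, −B = φ₋ (φ₊ > 0 > φ₋), C = ω₊, D = ω₋; explicitly λ* = (−φ₊ ω₋/(φ₋ ω₊))^{1/3} and θ* = [ v ω₊ / (4 f (φ₊)(φ₊ − λ*² φ₋)) ]^{1/5} with v, f > 0. Then (h₊*, h₋*) satisfies the first-order conditions of minimizing AMSE₁ₙ(h₊,h₋) = (φ₊ h₊² − φ₋ h₋²)² + (v/(n f))(ω₊/h₊ + ω₋/h₋) over (0,∞)². -/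

import Mathlib

/-- The explicit AFO bandwidths in the opposite-sign case satisfy the first-order
conditions of minimizing AMSE₁ₙ(h₊,h₋) = (φ₊h₊² − φ₋h₋²)² + (v/(nf))(ω₊/h₊ + ω₋/h₋). -/
theorem afo_bandwidths_foc (φp φm ωp ωm v f : ℝ) (n : ℕ)
    (hφp : 0 < φp) (hφm : φm < 0) (hωp : 0 < ωp) (hωm : 0 < ωm)
    (hv : 0 < v) (hf : 0 < f) (hn : 0 < n)
    (lam θ hp hm : ℝ)
    (hlam : lam = (-(φp * ωm) / (φm * ωp)) ^ ((1 : ℝ) / 3))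
    (hθ : θ = (v * ωp / (4 * f * φp * (φp - lam ^ 2 * φm))) ^ ((1 : ℝ) / 5))
    (hhp : hp = θ * (n : ℝ) ^ (-(1 / 5 : ℝ)))
    (hhm : hm = lam * hp) :
    4 * φp * hp * (φp * hp ^ 2 - φm * hm ^ 2) - (v / ((n : ℝ) * f)) * ωp / hp ^ 2 = 0 ∧
    -(4 * φm * hm * (φp * hp ^ 2 - φm * hm ^ 2)) - (v / ((n : ℝ) * f)) * ωm / hm ^ 2 = 0 := by
  have hnpos : (0 : ℝ) < (n : ℝ) := by exact_mod_cast hn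
  have hbase : 0 < -(φp * ωm) / (φm * ωp) :=
    div_pos_of_neg_of_neg (by nlinarith) (by nlinarith)
  have hlampos : 0 < lam := hlam ▸ Real.rpow_pos_of_pos hbase _
  have hlam3 : lam ^ 3 = -(φp * ωm) / (φm * ωp) := by
    rw [hlam, ← Real.rpow_natCast (_ ^ ((1:ℝ)/3)) 3, ← Real.rpow_mul hbase.le]
    norm_num
  have hK : 0 < φp - lam ^ 2 * φm := by nlinarith
  have hθ5 : θ ^ 5 = v * ωp / (4 * f * φp * (φp - lam ^ 2 * φm)) := by
    have hX : 0 < v * ωp / (4 * f * φp * (φp - lam ^ 2 * φm)) := by positivity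
    rw [hθ, ← Real.rpow_natCast (_ ^ ((1:ℝ)/5)) 5, ← Real.rpow_mul hX.le]
    norm_num
  have hn5 : ((n : ℝ) ^ (-(1 / 5 : ℝ))) ^ 5 = ((n : ℝ))⁻¹ := by
    rw [← Real.rpow_natCast ((n:ℝ) ^ (-(1/5:ℝ))) 5, ← Real.rpow_mul hnpos.le]
    norm_num
    rw [Real.rpow_neg_one]
  have hhp5 : hp ^ 5 = v * ωp / (4 * f * φp * (φp - lam ^ 2 * φm)) / n := by
    rw [hhp, mul_pow, hθ5, hn5]; ring
  have hppos : 0 < hp := by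
    rw [hhp]; exact mul_pos (hθ ▸ Real.rpow_pos_of_pos (by positivity) _)
      (Real.rpow_pos_of_pos hnpos _)
  have hpne : hp ≠ 0 := hppos.ne'
  have hKne := hK.ne'
  have hφmne : φm ≠ 0 := hφm.ne
  have hωpne : ωp ≠ 0 := hωp.ne'
  have hfne : f ≠ 0 := hf.ne'
  have hφpne : φp ≠ 0 := hφp.ne'
  have hnne : (n : ℝ) ≠ 0 := hnpos.ne'
  have hlamne : lam ≠ 0 := hlampos.ne'
  have key1 : (v / ((n : ℝ) * f)) * ωp = 4 * φp * (φp - lam ^ 2 * φm) * hp ^ 5 := by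
    rw [hhp5]; field_simp
  have key2 : (v / ((n : ℝ) * f)) * ωm = -(4 * φm * lam ^ 3 * (φp - lam ^ 2 * φm)) * hp ^ 5 := by
    rw [hhp5, hlam3]; field_simp; ring_nf
    field_simp [show φp - φm * lam ^ 2 ≠ 0 by rwa [mul_comm] at hKne]
  constructor
  · rw [sub_eq_zero, hhm, key1]
    field_simp
  · rw [sub_eq_zero, hhm, key2]
    field_simp
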